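/- Let ℛ ∈ ℒ(H) be self-adjoint and satisfy the algebraic Riccati equation 𝒜*ℛ + ℛ𝒜 + ℛB₁B₁*ℛ − (1/γ)ℛB₂B₂*ℛ − I = 0 with γ > 0. Then along any solution of u' + 𝒜u + B₁B₁*ℛu = B₂w, one has (ℛu(0), u(0)) + γ∫₀^∞|w|² dt ≥ ∫₀^∞ |u|² dt + ∫₀^∞ |B₁*ℛu|² dt, i.e. the closed-loop system achieves L² gain at most γ from the disturbance w to the output (u, B₁*ℛu). -/

import Mathlib

open MeasureTheory ContinuousLinearMap Filter
open scoped ComplexInnerProductSpace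

/-- if `ℛ` is a bounded self-adjoint solution of the algebraic Riccati
equation `𝒜*ℛ + ℛ𝒜 + ℛB₁B₁*ℛ − (1/γ)ℛB₂B₂*ℛ − I = 0` (`γ > 0`), then along any
solution of `u' + 𝒜u + B₁B₁*ℛu = B₂w` with `(ℛu(T), u(T)) → 0`, the closed loop
achieves `L²` gain at most `γ`:
`∫₀^∞ |u|² + ∫₀^∞ |B₁*ℛu|² ≤ (ℛu(0), u(0)) + γ ∫₀^∞ |w|²`. -/
theorem riccati_L2_gain
    {H : Type*} [NormedAddCommGroup H] [InnerProductSpace ℂ H] [CompleteSpace H]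
    (A B₁ B₂ R : H →L[ℂ] H) (γ : ℝ) (hγ : 0 < γ) (hsa : IsSelfAdjoint R)
    (hric : adjoint A ∘L R + R ∘L A + R ∘L B₁ ∘L adjoint B₁ ∘L R
        - (1 / γ : ℂ) • (R ∘L B₂ ∘L adjoint B₂ ∘L R) - ContinuousLinearMap.id ℂ H = 0)
    (w u : ℝ → H)
    (hu : ∀ t : ℝ,
      HasDerivAt u (-(A (u t)) - B₁ ((adjoint B₁) (R (u t))) + B₂ (w t)) t)
    (hw : IntegrableOn (fun t => ‖w t‖ ^ 2) (Set.Ioi (0:ℝ)))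
    (hui : IntegrableOn (fun t => ‖u t‖ ^ 2) (Set.Ioi (0:ℝ)))
    (hBi : IntegrableOn (fun t => ‖(adjoint B₁) (R (u t))‖ ^ 2) (Set.Ioi (0:ℝ)))
    (hlim : Tendsto (fun T : ℝ => (⟪R (u T), u T⟫).re) atTop (nhds 0)) :
    (∫ t in Set.Ioi (0:ℝ), ‖u t‖ ^ 2) + ∫ t in Set.Ioi (0:ℝ), ‖(adjoint B₁) (R (u t))‖ ^ 2
      ≤ (⟪R (u 0), u 0⟫).re + γ * ∫ t in Set.Ioi (0:ℝ), ‖w t‖ ^ 2 := by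
  have hRadj : adjoint R = R := hsa
  have hR : ∀ x y : H, ⟪R x, y⟫ = ⟪x, R y⟫ := by
    intro x y
    nth_rewrite 1 [← hRadj]
    exact adjoint_inner_left R y x
  set g : ℝ → ℝ := fun t => γ * ‖w t‖ ^ 2 - ‖u t‖ ^ 2 - ‖(adjoint B₁) (R (u t))‖ ^ 2 with hgdef
  set V : ℝ → ℝ := fun t => (⟪R (u t), u t⟫).re with hVdef
  set p : ℝ → H := fun t => -(A (u t)) - B₁ ((adjoint B₁) (R (u t))) + B₂ (w t) with hpdef
  -- derivative of V
  have hVd : ∀ t : ℝ, HasDerivAt V ((⟪R (u t), p t⟫ + ⟪R (p t), u t⟫).re) t := by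
    intro t
    have h1' := ((R.restrictScalars ℝ).hasFDerivAt (x := u t)).comp_hasDerivAt t (hu t)
    have h1 : HasDerivAt (fun s : ℝ => R (u s)) (R (p t)) t := h1'
    have h2 : HasDerivAt (fun s : ℝ => (⟪R (u s), u s⟫ : ℂ))
        (⟪R (u t), p t⟫ + ⟪R (p t), u t⟫) t := h1.inner ℂ (hu t)
    exact Complex.reCLM.hasFDerivAt.comp_hasDerivAt t h2
  -- pointwise bound on derivative
  have key : ∀ t : ℝ, (⟪R (u t), p t⟫ + ⟪R (p t), u t⟫).re ≤ g t := by
    intro t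
    set v := u t
    set y := (adjoint B₁) (R v)
    set x := (adjoint B₂) (R v)
    have hconj : ⟪R (p t), v⟫ = (starRingEnd ℂ) ⟪R v, p t⟫ := by
      rw [hR, ← inner_conj_symm]
    have hz : (⟪R v, p t⟫ + ⟪R (p t), v⟫).re = 2 * (⟪R v, p t⟫).re := by
      rw [hconj, Complex.add_conj]
      simp
    -- Riccati applied to v
    have hricv : (adjoint A) (R v) + R (A v) + R (B₁ y) - (1/(γ:ℂ)) • R (B₂ x) - v = 0 := by
      have := DFunLike.congr_fun hric v
      simpa using this
    have hAv : 2 * (⟪R v, A v⟫).re = ‖v‖^2 + (1/γ) * ‖x‖^2 - ‖y‖^2 := by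
      have h0 : ⟪(adjoint A) (R v) + R (A v) + R (B₁ y) - (1/(γ:ℂ)) • R (B₂ x) - v, v⟫ = 0 := by
        rw [hricv]; simp
      rw [inner_sub_left, inner_sub_left, inner_add_left, inner_add_left,
        inner_smul_left, adjoint_inner_left, hR (A v) v, hR (B₁ y) v,
        hR (B₂ x) v] at h0
      have hb1 : (⟪B₁ y, R v⟫ : ℂ) = ⟪y, y⟫ := (adjoint_inner_right B₁ y (R v)).symm
      have hb2 : (⟪B₂ x, R v⟫ : ℂ) = ⟪x, x⟫ := (adjoint_inner_right B₂ x (R v)).symm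
      have h1 : (⟪A v, R v⟫ : ℂ) = (starRingEnd ℂ) ⟪R v, A v⟫ :=
        (inner_conj_symm (A v) (R v)).symm
      have h3 : (⟪y, y⟫ : ℂ) = ((‖y‖^2 : ℝ) : ℂ) := by
        rw [inner_self_eq_norm_sq_to_K]; norm_cast
      have h4 : (⟪x, x⟫ : ℂ) = ((‖x‖^2 : ℝ) : ℂ) := by
        rw [inner_self_eq_norm_sq_to_K]; norm_cast
      have h5 : (⟪v, v⟫ : ℂ) = ((‖v‖^2 : ℝ) : ℂ) := by
        rw [inner_self_eq_norm_sq_to_K]; norm_cast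
      rw [hb1, hb2, h1, Complex.add_conj, h3, h4, h5] at h0
      have hγc : (starRingEnd ℂ) (1/(γ:ℂ)) = (1/(γ:ℂ)) := by
        rw [map_div₀, map_one, Complex.conj_ofReal]
      rw [hγc] at h0
      norm_cast at h0
      have h0r : (2 * (⟪R v, A v⟫).re + ‖y‖^2 - 1/γ * ‖x‖^2 - ‖v‖^2 : ℝ) = 0 := by
        exact_mod_cast h0
      linarith
    -- expand ⟪R v, p t⟫
    have hp : (⟪R v, p t⟫).re = -(⟪R v, A v⟫).re - ‖y‖^2 + (⟪x, w t⟫).re := by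
      have hpt : p t = -(A v) - B₁ y + B₂ (w t) := rfl
      rw [hpt]
      simp only [inner_add_right, inner_sub_right, inner_neg_right]
      have h1 : (⟪R v, B₁ y⟫ : ℂ) = ((‖y‖^2 : ℝ) : ℂ) := by
        rw [← adjoint_inner_left, inner_self_eq_norm_sq_to_K]; norm_cast
      have h2 : (⟪R v, B₂ (w t)⟫ : ℂ) = ⟪x, w t⟫ := by rw [← adjoint_inner_left]
      rw [h1, h2]
      simp only [Complex.add_re, Complex.sub_re, Complex.neg_re, Complex.ofReal_re]
    -- Young's inequality
    have hyoung : 2 * (⟪x, w t⟫).re ≤ (1/γ) * ‖x‖^2 + γ * ‖w t‖^2 := by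
      have h1 : (⟪x, w t⟫).re ≤ ‖x‖ * ‖w t‖ := by
        refine le_trans (Complex.re_le_norm _) ?_
        exact norm_inner_le_norm x (w t)
      have h2 : 2 * (‖x‖ * ‖w t‖) ≤ (1/γ) * ‖x‖^2 + γ * ‖w t‖^2 := by
        rw [div_mul_eq_mul_div, one_mul, ← sub_nonneg]
        have : (1/γ) * (‖x‖ - γ * ‖w t‖)^2 ≥ 0 := by positivity
        have hexp : (1/γ) * (‖x‖ - γ * ‖w t‖)^2
            = ‖x‖^2/γ + γ*‖w t‖^2 - 2*(‖x‖*‖w t‖) := by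
          field_simp; ring
        linarith [hexp ▸ this]
      linarith
    have hgt : g t = γ * ‖w t‖^2 - ‖v‖^2 - ‖y‖^2 := rfl
    rw [hz, hp, hgt]
    linarith
  have hcont : Continuous V :=
    continuous_iff_continuousAt.mpr fun t => (hVd t).continuousAt
  have hgint : IntegrableOn g (Set.Ioi (0:ℝ)) := ((hw.const_mul γ).sub hui).sub hBi
  have hineq : ∀ T : ℝ, 0 ≤ T → V T - V 0 ≤ ∫ s in (0:ℝ)..T, g s := by
    intro T hT
    apply intervalIntegral.sub_le_integral_of_hasDeriv_right_of_le hT hcont.continuousOn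
      (fun s _ => (hVd s).hasDerivWithinAt)
    · rw [integrableOn_Icc_iff_integrableOn_Ioc]
      exact hgint.mono_set Set.Ioc_subset_Ioi_self
    · intro s _; exact key s
  have hT1 : Tendsto (fun T : ℝ => V T - V 0) atTop (nhds (-(V 0))) := by
    simpa using hlim.sub (tendsto_const_nhds (x := V 0))
  have hT2 : Tendsto (fun T : ℝ => ∫ s in (0:ℝ)..T, g s) atTop
      (nhds (∫ s in Set.Ioi (0:ℝ), g s)) :=
    intervalIntegral_tendsto_integral_Ioi 0 hgint tendsto_id
  have hfin : -(V 0) ≤ ∫ s in Set.Ioi (0:ℝ), g s := by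
    apply le_of_tendsto_of_tendsto hT1 hT2
    filter_upwards [eventually_ge_atTop (0:ℝ)] with T hT
    exact hineq T hT
  have hsplit : (∫ s in Set.Ioi (0:ℝ), g s)
      = γ * (∫ t in Set.Ioi (0:ℝ), ‖w t‖ ^ 2) - (∫ t in Set.Ioi (0:ℝ), ‖u t‖ ^ 2)
        - ∫ t in Set.Ioi (0:ℝ), ‖(adjoint B₁) (R (u t))‖ ^ 2 := by
    rw [hgdef]
    have i1 : IntegrableOn (fun t => γ * ‖w t‖ ^ 2 - ‖u t‖ ^ 2) (Set.Ioi (0:ℝ)) :=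
      (hw.const_mul γ).sub hui
    rw [integral_sub i1 hBi, integral_sub (hw.const_mul γ) hui, integral_const_mul]
  rw [hsplit] at hfin
  have hV0 : V 0 = (⟪R (u 0), u 0⟫).re := rfl
  linarith [hV0 ▸ hfin]
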